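/- arXiv:2605.06295 — 2 statements merged into one kernel-verified Lean document; each statement's English description precedes it below -/
import Mathlib

section
/- Scaled Shapley-Taylor interactions hierarchically decompose the Shapley value: for any game v and player i, m_{{i}}(v) + ∑_{j≠i} (1/2)·ψ^{STII}_{{i,j}}(v) equals the Shapley value φ_i^{SV}(v). -/
open Finset

/-- Möbius transform of a cooperative game. -/
noncomputable def mobius {d : ℕ} (v : Finset (Fin d) → ℝ) (S : Finset (Fin d)) : ℝ :=
  ∑ T ∈ S.powerset, (-1 : ℝ) ^ (S.card - T.card) * v T

/-- Order-2 Shapley-Taylor interaction index for the pair `{i,j}`: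
`ψ^{STII}_{{i,j}} = ∑_{S : i,j ∈ S} m_S(v)/C(|S|,2)`. -/
noncomputable def stiiPair {d : ℕ} (v : Finset (Fin d) → ℝ) (i j : Fin d) : ℝ :=
  ∑ S ∈ Finset.univ.powerset.filter (fun S => i ∈ S ∧ j ∈ S),
    mobius v S / ((S.card.choose 2 : ℕ) : ℝ)

/-- Shapley value of `i` in Möbius representation: `∑_{S : i ∈ S} m_S(v)/|S|`. -/
noncomputable def phiSV {d : ℕ} (v : Finset (Fin d) → ℝ) (i : Fin d) : ℝ :=
  ∑ S ∈ Finset.univ.powerset.filter (fun S => i ∈ S), mobius v S / (S.card : ℝ)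

/-- Scaled Shapley-Taylor interactions hierarchically decompose the Shapley
value: `φ_i^{SV} = m_{{i}} + (1/2) ∑_{j ≠ i} ψ^{STII}_{{i,j}}`. -/
theorem stii_hierarchical_decomposition {d : ℕ} (v : Finset (Fin d) → ℝ) (i : Fin d) :
    phiSV v i = mobius v {i} + (1 / 2) * ∑ j ∈ Finset.univ.erase i, stiiPair v i j := by
  classical
  set F : Finset (Finset (Fin d)) := Finset.univ.powerset.filter (fun S => i ∈ S) with hF
  have hswap : ∑ j ∈ Finset.univ.erase i, stiiPair v i j
      = ∑ S ∈ F, ((S.card - 1 : ℕ) : ℝ) * (mobius v S / ((S.card.choose 2 : ℕ) : ℝ)) := by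
    have h1 : ∀ j : Fin d, stiiPair v i j
        = ∑ S ∈ F, if j ∈ S then mobius v S / ((S.card.choose 2 : ℕ) : ℝ) else 0 := by
      intro j
      rw [stiiPair, ← Finset.filter_filter, Finset.sum_filter]
    simp only [h1]
    rw [Finset.sum_comm]
    refine Finset.sum_congr rfl fun S hS => ?_
    have hiS : i ∈ S := (Finset.mem_filter.mp hS).2
    rw [← Finset.sum_filter]
    have hset : (Finset.univ.erase i).filter (fun j => j ∈ S) = S.erase i := by
      ext j; simp [and_comm]
    rw [hset, Finset.sum_const, Finset.card_erase_of_mem hiS, nsmul_eq_mul]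
  rw [hswap]
  have hiF : ({i} : Finset (Fin d)) ∈ F := by
    simp [hF]
  rw [phiSV, ← hF, ← Finset.add_sum_erase _ _ hiF, ← Finset.add_sum_erase _ _ hiF]
  simp only [Finset.card_singleton, Nat.cast_one, div_one, Nat.sub_self, Nat.cast_zero,
    zero_mul, zero_add]
  rw [Finset.mul_sum]
  refine congrArg _ (Finset.sum_congr rfl fun S hS => ?_)
  have hSF := Finset.mem_erase.mp hS
  have hiS : i ∈ S := (Finset.mem_filter.mp hSF.2).2
  have h2 : 1 < S.card := by
    rw [Finset.one_lt_card]
    by_contra h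
    push_neg at h
    exact hSF.1 (Finset.eq_singleton_iff_unique_mem.mpr ⟨hiS, fun x hx => (h x hx i hiS).symm ▸ rfl⟩)
  have hn : (S.card : ℝ) ≠ 0 := by positivity
  have hn1 : ((S.card : ℝ) - 1) ≠ 0 := by
    have : (1 : ℝ) < S.card := by exact_mod_cast h2
    linarith
  rw [Nat.cast_choose_two]
  rw [Nat.cast_sub h2.le, Nat.cast_one]
  field_simp
end

section
/- The Faithful Shapley Interaction Index of order 2, scaled directionally, hierarchically decomposes the Shapley value: ψ^{FSII}_{{i}} + ∑_{j≠i} (1/2)ψ^{FSII}_{{i,j}} = φ_i^{SV}. -/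
open Finset

/-- Order-2 Faithful Shapley Interaction Index, singleton term. -/
noncomputable def fsiiSingle {d : ℕ} (v : Finset (Fin d) → ℝ) (i : Fin d) : ℝ :=
  mobius v {i} -
    ∑ T ∈ Finset.univ.powerset.filter (fun T => i ∈ T ∧ 2 < T.card),
      (2 * ((T.card : ℝ) - 2) / ((T.card : ℝ) * ((T.card : ℝ) + 1))) * mobius v T

/-- Order-2 Faithful Shapley Interaction Index, pair term (for `i ≠ j`). -/
noncomputable def fsiiPair {d : ℕ} (v : Finset (Fin d) → ℝ) (i j : Fin d) : ℝ :=
  mobius v {i, j} +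
    ∑ T ∈ Finset.univ.powerset.filter (fun T => i ∈ T ∧ j ∈ T ∧ 2 < T.card),
      (6 / ((T.card : ℝ) * ((T.card : ℝ) + 1))) * mobius v T

section Aux

variable {d : ℕ}

/-- Swap a double sum over `j ≠ i` and subsets `T` containing both `i` and `j`. -/
lemma fsii_swap (i : Fin d) (p : Finset (Fin d) → Prop) [DecidablePred p]
    (c : Finset (Fin d) → ℝ) :
    ∑ j ∈ Finset.univ.erase i, ∑ T ∈ (Finset.univ : Finset (Fin d)).powerset,
        (if i ∈ T ∧ j ∈ T ∧ p T then c T else 0)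
      = ∑ T ∈ (Finset.univ : Finset (Fin d)).powerset,
        (if i ∈ T ∧ p T then ((T.card : ℝ) - 1) * c T else 0) := by
  rw [Finset.sum_comm]
  refine Finset.sum_congr rfl (fun T _ => ?_)
  by_cases h : i ∈ T ∧ p T
  · have hcond : ∀ j, (i ∈ T ∧ j ∈ T ∧ p T) ↔ j ∈ T := by
      intro j; constructor
      · exact fun hh => hh.2.1
      · exact fun hj => ⟨h.1, hj, h.2⟩
    simp only [hcond, if_pos h]
    rw [Finset.sum_ite_mem]
    have hinter : (Finset.univ.erase i) ∩ T = T.erase i := by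
      ext j; simp [and_comm]
    rw [hinter, Finset.sum_const, Finset.card_erase_of_mem h.1]
    have h1 : 1 ≤ T.card := Finset.card_pos.mpr ⟨i, h.1⟩
    rw [nsmul_eq_mul, Nat.cast_sub h1, Nat.cast_one]
  · have hcond : ∀ j, ¬ (i ∈ T ∧ j ∈ T ∧ p T) := by
      intro j hh; exact h ⟨hh.1, hh.2.2⟩
    simp [hcond, h]

lemma mobius_single_eq (v : Finset (Fin d) → ℝ) (i : Fin d) :
    mobius v {i} = ∑ T ∈ (Finset.univ : Finset (Fin d)).powerset,
      (if i ∈ T ∧ T.card = 1 then mobius v T else 0) := by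
  rw [Finset.sum_eq_single_of_mem ({i} : Finset (Fin d)) (by simp)]
  · simp
  · intro T _ hne
    rw [if_neg]
    rintro ⟨hiT, hc⟩
    obtain ⟨a, ha⟩ := Finset.card_eq_one.mp hc
    subst ha
    rw [Finset.mem_singleton] at hiT
    exact hne (by rw [hiT])

lemma mobius_pair_eq (v : Finset (Fin d) → ℝ) {i j : Fin d} (hij : j ≠ i) :
    mobius v {i, j} = ∑ T ∈ (Finset.univ : Finset (Fin d)).powerset,
      (if i ∈ T ∧ j ∈ T ∧ T.card = 2 then mobius v T else 0) := by
  have hcard2 : ({i, j} : Finset (Fin d)).card = 2 := Finset.card_pair (Ne.symm hij)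
  rw [Finset.sum_eq_single_of_mem ({i, j} : Finset (Fin d)) (by simp)]
  · rw [if_pos ⟨by simp, by simp, hcard2⟩]
  · intro T _ hne
    rw [if_neg]
    rintro ⟨hiT, hjT, hc⟩
    have hsub : ({i, j} : Finset (Fin d)) ⊆ T := by
      intro x hx
      rcases Finset.mem_insert.mp hx with h | h
      · exact h ▸ hiT
      · exact (Finset.mem_singleton.mp h) ▸ hjT
    exact hne (Finset.eq_of_subset_of_card_le hsub (by rw [hc, hcard2])).symm

end Aux

/-- The directionally scaled order-2 FSII hierarchically decomposes the Shapley
value: `ψ^{FSII}_{{i}} + (1/2) ∑_{j ≠ i} ψ^{FSII}_{{i,j}} = φ_i^{SV}`. -/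
theorem fsii_hierarchical_decomposition {d : ℕ} (v : Finset (Fin d) → ℝ) (i : Fin d) :
    fsiiSingle v i + (1 / 2) * ∑ j ∈ Finset.univ.erase i, fsiiPair v i j =
      phiSV v i := by
  classical
  unfold fsiiSingle fsiiPair phiSV
  rw [mobius_single_eq v i]
  rw [Finset.sum_filter, Finset.sum_filter]
  have hpairs : ∑ j ∈ Finset.univ.erase i,
      (mobius v {i, j} +
        ∑ T ∈ Finset.univ.powerset.filter (fun T => i ∈ T ∧ j ∈ T ∧ 2 < T.card),
          (6 / ((T.card : ℝ) * ((T.card : ℝ) + 1))) * mobius v T)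
      = ∑ T ∈ (Finset.univ : Finset (Fin d)).powerset,
          ((if i ∈ T ∧ T.card = 2 then ((T.card : ℝ) - 1) * mobius v T else 0)
            + (if i ∈ T ∧ 2 < T.card then
                ((T.card : ℝ) - 1) * ((6 / ((T.card : ℝ) * ((T.card : ℝ) + 1))) * mobius v T)
              else 0)) := by
    rw [Finset.sum_add_distrib]
    rw [Finset.sum_add_distrib]
    congr 1
    · rw [← fsii_swap i (fun T => T.card = 2) (fun T => mobius v T)]
      refine Finset.sum_congr rfl (fun j hj => ?_)
      exact mobius_pair_eq v (Finset.ne_of_mem_erase hj)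
    · rw [← fsii_swap i (fun T => 2 < T.card)
        (fun T => (6 / ((T.card : ℝ) * ((T.card : ℝ) + 1))) * mobius v T)]
      refine Finset.sum_congr rfl (fun j _ => ?_)
      rw [Finset.sum_filter]
  rw [hpairs]
  rw [Finset.mul_sum, ← Finset.sum_sub_distrib, ← Finset.sum_add_distrib]
  refine Finset.sum_congr rfl (fun T _ => ?_)
  by_cases hiT : i ∈ T
  · have h1 : 1 ≤ T.card := Finset.card_pos.mpr ⟨i, hiT⟩
    rcases eq_or_lt_of_le h1 with hc1 | hc1
    · -- card = 1
      have hc1' : T.card = 1 := hc1.symm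
      simp [hc1', hiT]
    · rcases eq_or_lt_of_le (Nat.succ_le_of_lt hc1) with hc2 | hc2
      · -- card = 2
        have hc2' : T.card = 2 := hc2.symm
        have hne1 : T.card ≠ 1 := by omega
        have hnlt : ¬ 2 < T.card := by omega
        simp only [hiT, hne1, hc2', hnlt, true_and, and_true, and_false, if_false, if_true,
          Nat.cast_ofNat, if_neg, not_false_eq_true]
        norm_num
        ring
      · -- card ≥ 3
        have hne1 : T.card ≠ 1 := by omega
        have hne2 : T.card ≠ 2 := by omega
        have hlt : 2 < T.card := hc2
        have htR : (3 : ℝ) ≤ (T.card : ℝ) := by exact_mod_cast hlt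
        have ht0 : (T.card : ℝ) ≠ 0 := by linarith
        have ht1 : (T.card : ℝ) + 1 ≠ 0 := by linarith
        simp only [hiT, hne1, hne2, hlt, true_and, and_true, and_false, if_false, if_true,
          if_neg, not_false_eq_true]
        field_simp
        ring
  · simp [hiT]
end
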